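/- Let H be an inner product space, x_1,…,x_n ∈ H, and δ_{ij} ≥ 0 for 1 ≤ i < j ≤ n such that δ_{ij} ≤ ‖x_i‖·‖x_j‖ − Re⟨x_i, x_j⟩. Then (∑_{i=1}^n ‖x_i‖)² ≥ ‖∑_{i=1}^n x_i‖² + 2 ∑_{1 ≤ i < j ≤ n} δ_{ij}. -/

import Mathlib

theorem stmt_7 {𝕜 H : Type*} [RCLike 𝕜] [NormedAddCommGroup H] [InnerProductSpace 𝕜 H]
    (n : ℕ) (x : ℕ → H) (δ : ℕ → ℕ → ℝ)
    (hδ : ∀ i ∈ Finset.Icc 1 n, ∀ j ∈ Finset.Icc 1 n, i < j → 0 ≤ δ i j)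
    (h : ∀ i ∈ Finset.Icc 1 n, ∀ j ∈ Finset.Icc 1 n, i < j →
      δ i j ≤ ‖x i‖ * ‖x j‖ - RCLike.re (inner 𝕜 (x i) (x j) : 𝕜)) :
    (∑ i ∈ Finset.Icc 1 n, ‖x i‖) ^ 2 ≥ ‖∑ i ∈ Finset.Icc 1 n, x i‖ ^ 2 +
      2 * ∑ i ∈ Finset.Icc 1 n, ∑ j ∈ Finset.Icc 1 n,
        (if i < j then δ i j else 0) := by
  classical
  set s := Finset.Icc 1 n with hs
  set a : ℕ → ℕ → ℝ := fun i j => ‖x i‖ * ‖x j‖ - RCLike.re (inner 𝕜 (x i) (x j) : 𝕜) with ha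
  have hdiag : ∀ i, a i i = 0 := by
    intro i
    simp [ha, ← @inner_self_eq_norm_mul_norm 𝕜]
  have hsymm : ∀ i j, a i j = a j i := by
    intro i j
    simp [ha, mul_comm, inner_re_symm]
  have hnorm : ‖∑ i ∈ s, x i‖ ^ 2 =
      ∑ i ∈ s, ∑ j ∈ s, RCLike.re (inner 𝕜 (x i) (x j) : 𝕜) := by
    rw [← @inner_self_eq_norm_sq 𝕜, sum_inner, map_sum]
    refine Finset.sum_congr rfl fun i _ => ?_
    rw [inner_sum, map_sum]
  have hsq : (∑ i ∈ s, ‖x i‖) ^ 2 = ∑ i ∈ s, ∑ j ∈ s, ‖x i‖ * ‖x j‖ := by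
    rw [sq, Finset.sum_mul_sum]
  have hsplit : ∀ i j, a i j = (if i < j then a i j else 0) + (if j < i then a i j else 0) := by
    intro i j
    rcases lt_trichotomy i j with hij | hij | hij
    · simp [hij, not_lt_of_gt hij]
    · simp [hij, hdiag]
    · simp [hij, not_lt_of_gt hij]
  have key : ∑ i ∈ s, ∑ j ∈ s, a i j
      = 2 * ∑ i ∈ s, ∑ j ∈ s, (if i < j then a i j else 0) := by
    have h1 : ∑ i ∈ s, ∑ j ∈ s, a i j
        = (∑ i ∈ s, ∑ j ∈ s, (if i < j then a i j else 0))
          + ∑ i ∈ s, ∑ j ∈ s, (if j < i then a i j else 0) := by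
      rw [← Finset.sum_add_distrib]
      refine Finset.sum_congr rfl fun i _ => ?_
      rw [← Finset.sum_add_distrib]
      exact Finset.sum_congr rfl fun j _ => hsplit i j
    have h2 : ∑ i ∈ s, ∑ j ∈ s, (if j < i then a i j else 0)
        = ∑ i ∈ s, ∑ j ∈ s, (if i < j then a i j else 0) := by
      rw [Finset.sum_comm]
      refine Finset.sum_congr rfl fun i _ => Finset.sum_congr rfl fun j _ => ?_
      by_cases hij : i < j <;> simp [hij, hsymm i j]
    rw [h1, h2]; ring
  have hcomp : ∑ i ∈ s, ∑ j ∈ s, (if i < j then δ i j else 0)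
      ≤ ∑ i ∈ s, ∑ j ∈ s, (if i < j then a i j else 0) := by
    refine Finset.sum_le_sum fun i hi => Finset.sum_le_sum fun j hj => ?_
    by_cases hij : i < j
    · simp only [hij, if_true]; exact h i hi j hj hij
    · simp [hij]
  have htotal : ‖∑ i ∈ s, x i‖ ^ 2 + ∑ i ∈ s, ∑ j ∈ s, a i j = (∑ i ∈ s, ‖x i‖) ^ 2 := by
    rw [hnorm, hsq, ← Finset.sum_add_distrib]
    refine Finset.sum_congr rfl fun i _ => ?_
    rw [← Finset.sum_add_distrib]
    refine Finset.sum_congr rfl fun j _ => ?_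
    simp [ha]
  rw [ge_iff_le, ← htotal, key]
  linarith [hcomp]
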